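/- arXiv:2510.27555 — 2 statements merged into one kernel-verified Lean document; each statement's English description precedes it below -/
import Mathlib

section
/- Let d₁, d₂, d₃ > 0 and set A_{kl} = (d_k + d_l)/(2√(d_k d_l)) for k,l ∈ {1,2,3}. Suppose θ, σ > 0 satisfy θ > A₁₂ and (θ² − A₁₂²)(θ²σ² − A₁₃²) > (A₂₃θ² − A₁₂A₁₃)². Then for all nonnegative integers i ≤ j, the symmetric 3×3 matrix B_{ij} with entries B₁₁ = d₁θ^{(i+2)²}σ^{(j+2)²}, B₁₂ = ((d₁+d₂)/2)θ^{(i+1)²}σ^{(j+2)²}, B₁₃ = ((d₁+d₃)/2)θ^{(i+1)²}σ^{(j+1)²}, B₂₂ = d₂θ^{i²}σ^{(j+2)²}, B₂₃ = ((d₂+d₃)/2)θ^{i²}σ^{(j+1)²}, B₃₃ = d₃θ^{i²}σ^{j²} is positive definite. -/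
lemma quad_pos (a b c p q r x y z : ℝ) (ha : 0 < a)
    (hab : 0 < a*b - p^2)
    (hD : 0 < (a*b - p^2)*(a*c - q^2) - (a*r - p*q)^2)
    (hxyz : ¬(x = 0 ∧ y = 0 ∧ z = 0)) :
    0 < a*x^2 + b*y^2 + c*z^2 + 2*p*x*y + 2*q*x*z + 2*r*y*z := by
  set F := a*x^2 + b*y^2 + c*z^2 + 2*p*x*y + 2*q*x*z + 2*r*y*z with hF
  have key : a * (a*b - p^2) * F =
      (a*b - p^2) * (a*x + p*y + q*z)^2 + ((a*b - p^2)*y + (a*r - p*q)*z)^2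
        + ((a*b - p^2)*(a*c - q^2) - (a*r - p*q)^2) * z^2 := by
    rw [hF]; ring
  have hKF : 0 < a * (a*b - p^2) * F := by
    rw [key]
    rcases ne_or_eq z 0 with hz | hz
    · have h3 : 0 < ((a*b - p^2)*(a*c - q^2) - (a*r - p*q)^2) * z^2 :=
        mul_pos hD (by positivity)
      nlinarith [mul_nonneg hab.le (sq_nonneg (a*x + p*y + q*z)),
        sq_nonneg ((a*b - p^2)*y + (a*r - p*q)*z)]
    · subst hz
      rcases ne_or_eq y 0 with hy | hy
      · have h3 : 0 < ((a*b - p^2)*y + (a*r - p*q)*0)^2 := by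
          have : (a*b - p^2)*y + (a*r - p*q)*0 ≠ 0 := by simpa using mul_ne_zero hab.ne' hy
          positivity
        nlinarith [mul_nonneg hab.le (sq_nonneg (a*x + p*y + q*0)), sq_nonneg (0:ℝ)]
      · subst hy
        have hx : x ≠ 0 := by simpa using hxyz
        have h3 : 0 < (a*b - p^2) * (a*x + p*0 + q*0)^2 := by
          apply mul_pos hab
          simp only [mul_zero, add_zero]
          positivity
        nlinarith [sq_nonneg ((a*b - p^2)*0 + (a*r - p*q)*0)]
  nlinarith [mul_pos ha hab]

theorem Bij_posDef
    (d₁ d₂ d₃ : ℝ) (hd₁ : 0 < d₁) (hd₂ : 0 < d₂) (hd₃ : 0 < d₃)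
    (θ σ : ℝ) (hθ : 0 < θ) (hσ : 0 < σ)
    (A₁₂ A₁₃ A₂₃ : ℝ)
    (hA₁₂ : A₁₂ = (d₁ + d₂) / (2 * Real.sqrt (d₁ * d₂)))
    (hA₁₃ : A₁₃ = (d₁ + d₃) / (2 * Real.sqrt (d₁ * d₃)))
    (hA₂₃ : A₂₃ = (d₂ + d₃) / (2 * Real.sqrt (d₂ * d₃)))
    (h1 : A₁₂ < θ)
    (h2 : (A₂₃ * θ ^ 2 - A₁₂ * A₁₃) ^ 2 <
      (θ ^ 2 - A₁₂ ^ 2) * (θ ^ 2 * σ ^ 2 - A₁₃ ^ 2))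
    (i j : ℕ) (hij : i ≤ j) :
    Matrix.PosDef
      !![d₁ * θ ^ ((i + 2) ^ 2) * σ ^ ((j + 2) ^ 2),
         (d₁ + d₂) / 2 * θ ^ ((i + 1) ^ 2) * σ ^ ((j + 2) ^ 2),
         (d₁ + d₃) / 2 * θ ^ ((i + 1) ^ 2) * σ ^ ((j + 1) ^ 2);
         (d₁ + d₂) / 2 * θ ^ ((i + 1) ^ 2) * σ ^ ((j + 2) ^ 2),
         d₂ * θ ^ (i ^ 2) * σ ^ ((j + 2) ^ 2),
         (d₂ + d₃) / 2 * θ ^ (i ^ 2) * σ ^ ((j + 1) ^ 2);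
         (d₁ + d₃) / 2 * θ ^ ((i + 1) ^ 2) * σ ^ ((j + 1) ^ 2),
         (d₂ + d₃) / 2 * θ ^ (i ^ 2) * σ ^ ((j + 1) ^ 2),
         d₃ * θ ^ (i ^ 2) * σ ^ (j ^ 2)] := by
  subst hA₁₂ hA₁₃ hA₂₃
  -- Eliminate square roots from the hypotheses.
  set s12 := Real.sqrt (d₁ * d₂) with hs12
  set s13 := Real.sqrt (d₁ * d₃) with hs13
  set s23 := Real.sqrt (d₂ * d₃) with hs23
  have hp12 : 0 < s12 := Real.sqrt_pos.mpr (by positivity)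
  have hp13 : 0 < s13 := Real.sqrt_pos.mpr (by positivity)
  have hp23 : 0 < s23 := Real.sqrt_pos.mpr (by positivity)
  have hq12 : s12 ^ 2 = d₁ * d₂ := Real.sq_sqrt (by positivity)
  have hq13 : s13 ^ 2 = d₁ * d₃ := Real.sq_sqrt (by positivity)
  have hq23 : s23 ^ 2 = d₂ * d₃ := Real.sq_sqrt (by positivity)
  have hmul : s12 * s13 = d₁ * s23 := by
    rw [hs12, hs13, hs23, ← Real.sqrt_mul (by positivity)]
    rw [show d₁ * d₂ * (d₁ * d₃) = d₁^2 * (d₂ * d₃) by ring, Real.sqrt_mul (by positivity),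
      Real.sqrt_sq hd₁.le]
  rw [div_lt_iff₀ (by positivity)] at h1
  have H1 : (d₁ + d₂)^2 < 4*d₁*d₂*θ^2 := by
    nlinarith [hq12, h1, mul_pos hθ hp12]
  have H2 : (2*d₁*(d₂+d₃)*θ^2 - (d₁+d₂)*(d₁+d₃))^2 <
      (4*d₁*d₂*θ^2 - (d₁+d₂)^2) * (4*d₁*d₃*θ^2*σ^2 - (d₁+d₃)^2) := by
    have e12 : ((d₁ + d₂) / (2 * s12)) ^ 2 = (d₁ + d₂)^2 / (4 * (d₁ * d₂)) := by
      rw [div_pow, mul_pow, hq12]; norm_num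
    have e13 : ((d₁ + d₃) / (2 * s13)) ^ 2 = (d₁ + d₃)^2 / (4 * (d₁ * d₃)) := by
      rw [div_pow, mul_pow, hq13]; norm_num
    have e23 : (d₂ + d₃) / (2 * s23) * θ ^ 2 - (d₁ + d₂) / (2 * s12) * ((d₁ + d₃) / (2 * s13)) =
        (2*d₁*(d₂+d₃)*θ^2 - (d₁+d₂)*(d₁+d₃)) / (4 * d₁ * s23) := by
      rw [div_mul_div_comm]
      rw [show 2 * s12 * (2 * s13) = 4 * (s12 * s13) by ring, hmul]
      field_simp
      ring
    rw [e12, e13, e23, div_pow] at h2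
    rw [div_lt_iff₀ (by positivity)] at h2
    calc (2*d₁*(d₂+d₃)*θ^2 - (d₁+d₂)*(d₁+d₃))^2
        < (θ ^ 2 - (d₁ + d₂) ^ 2 / (4 * (d₁ * d₂))) *
            (θ ^ 2 * σ ^ 2 - (d₁ + d₃) ^ 2 / (4 * (d₁ * d₃))) * (4 * d₁ * s23) ^ 2 := h2
      _ = (4*d₁*d₂*θ^2 - (d₁+d₂)^2) * (4*d₁*d₃*θ^2*σ^2 - (d₁+d₃)^2) := by
          rw [mul_pow, mul_pow, hq23]
          field_simp
  -- Now prove positive definiteness.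
  rw [Matrix.posDef_iff_dotProduct_mulVec]
  constructor
  · ext k l
    fin_cases k <;> fin_cases l <;> simp [Matrix.conjTranspose_apply]
  · intro x hx
    have hT1 : θ ^ ((i + 1) ^ 2) = θ ^ (i ^ 2) * θ ^ (2*i+1) := by
      rw [← pow_add]; congr 1; ring
    have hT2 : θ ^ ((i + 2) ^ 2) = θ ^ (i ^ 2) * (θ ^ (2*i+1))^2 * θ^2 := by
      rw [← pow_mul, ← pow_add, ← pow_add]; congr 1; ring
    have hS1 : σ ^ ((j + 1) ^ 2) = σ ^ (j ^ 2) * σ ^ (2*j+1) := by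
      rw [← pow_add]; congr 1; ring
    have hS2 : σ ^ ((j + 2) ^ 2) = σ ^ (j ^ 2) * (σ ^ (2*j+1))^2 * σ^2 := by
      rw [← pow_mul, ← pow_add, ← pow_add]; congr 1; ring
    have hform : dotProduct (star x)
        (Matrix.mulVec !![d₁ * θ ^ ((i + 2) ^ 2) * σ ^ ((j + 2) ^ 2),
         (d₁ + d₂) / 2 * θ ^ ((i + 1) ^ 2) * σ ^ ((j + 2) ^ 2),
         (d₁ + d₃) / 2 * θ ^ ((i + 1) ^ 2) * σ ^ ((j + 1) ^ 2);
         (d₁ + d₂) / 2 * θ ^ ((i + 1) ^ 2) * σ ^ ((j + 2) ^ 2),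
         d₂ * θ ^ (i ^ 2) * σ ^ ((j + 2) ^ 2),
         (d₂ + d₃) / 2 * θ ^ (i ^ 2) * σ ^ ((j + 1) ^ 2);
         (d₁ + d₃) / 2 * θ ^ ((i + 1) ^ 2) * σ ^ ((j + 1) ^ 2),
         (d₂ + d₃) / 2 * θ ^ (i ^ 2) * σ ^ ((j + 1) ^ 2),
         d₃ * θ ^ (i ^ 2) * σ ^ (j ^ 2)] x) =
        d₁ * (θ ^ (i^2) * (θ ^ (2*i+1))^2 * θ^2) * (σ ^ (j^2) * (σ ^ (2*j+1))^2 * σ^2) * (x 0)^2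
        + d₂ * θ ^ (i^2) * (σ ^ (j^2) * (σ ^ (2*j+1))^2 * σ^2) * (x 1)^2
        + d₃ * θ ^ (i^2) * σ ^ (j^2) * (x 2)^2
        + (d₁+d₂) * (θ ^ (i^2) * θ ^ (2*i+1)) * (σ ^ (j^2) * (σ ^ (2*j+1))^2 * σ^2) * (x 0 * x 1)
        + (d₁+d₃) * (θ ^ (i^2) * θ ^ (2*i+1)) * (σ ^ (j^2) * σ ^ (2*j+1)) * (x 0 * x 2)
        + (d₂+d₃) * θ ^ (i^2) * (σ ^ (j^2) * σ ^ (2*j+1)) * (x 1 * x 2) := by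
      simp [dotProduct, Matrix.mulVec, Fin.sum_univ_three]
      rw [hT1, hT2, hS1, hS2]
      ring
    rw [hform]
    -- apply quad_pos to the scaled quadratic form
    have ha : (0:ℝ) < d₁ * θ^2 * σ^2 := by positivity
    have hab : (0:ℝ) < (d₁*θ^2*σ^2) * (d₂*θ^2*σ^2) - ((d₁+d₂)*θ*σ^2/2)^2 := by
      have : (d₁*θ^2*σ^2) * (d₂*θ^2*σ^2) - ((d₁+d₂)*θ*σ^2/2)^2
          = θ^2*σ^4/4 * (4*d₁*d₂*θ^2 - (d₁+d₂)^2) := by ring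
      rw [this]
      exact mul_pos (by positivity) (by linarith)
    have hD : (0:ℝ) < ((d₁*θ^2*σ^2) * (d₂*θ^2*σ^2) - ((d₁+d₂)*θ*σ^2/2)^2)
        * ((d₁*θ^2*σ^2) * (d₃*θ^2*σ^2) - ((d₁+d₃)*θ*σ/2)^2)
        - ((d₁*θ^2*σ^2) * ((d₂+d₃)*θ^2*σ/2) - ((d₁+d₂)*θ*σ^2/2) * ((d₁+d₃)*θ*σ/2))^2 := by
      have : ((d₁*θ^2*σ^2) * (d₂*θ^2*σ^2) - ((d₁+d₂)*θ*σ^2/2)^2)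
          * ((d₁*θ^2*σ^2) * (d₃*θ^2*σ^2) - ((d₁+d₃)*θ*σ/2)^2)
          - ((d₁*θ^2*σ^2) * ((d₂+d₃)*θ^2*σ/2) - ((d₁+d₂)*θ*σ^2/2) * ((d₁+d₃)*θ*σ/2))^2
          = θ^4*σ^6/16 * ((4*d₁*d₂*θ^2 - (d₁+d₂)^2) * (4*d₁*d₃*θ^2*σ^2 - (d₁+d₃)^2)
              - (2*d₁*(d₂+d₃)*θ^2 - (d₁+d₂)*(d₁+d₃))^2) := by ring
      rw [this]
      exact mul_pos (by positivity) (by linarith)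
    have hne : ¬(θ ^ (2*i+1) * θ * (σ ^ (2*j+1) * σ) * x 0 = 0 ∧
        σ ^ (2*j+1) * σ * x 1 = 0 ∧ x 2 = 0) := by
      rintro ⟨hz1, hz2, hz3⟩
      apply hx
      have hc1 : θ ^ (2*i+1) * θ * (σ ^ (2*j+1) * σ) ≠ 0 := by positivity
      have hc2 : σ ^ (2*j+1) * σ ≠ 0 := by positivity
      have h0 : x 0 = 0 := by
        rcases mul_eq_zero.mp hz1 with h | h
        · exact absurd h hc1
        · exact h
      have h1' : x 1 = 0 := by
        rcases mul_eq_zero.mp hz2 with h | h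
        · exact absurd h hc2
        · exact h
      funext k
      fin_cases k
      · exact h0
      · exact h1'
      · exact hz3
    have hF := quad_pos (d₁*θ^2*σ^2) (d₂*θ^2*σ^2) (d₃*θ^2*σ^2)
      ((d₁+d₂)*θ*σ^2/2) ((d₁+d₃)*θ*σ/2) ((d₂+d₃)*θ^2*σ/2)
      (θ ^ (2*i+1) * θ * (σ ^ (2*j+1) * σ) * x 0) (σ ^ (2*j+1) * σ * x 1) (x 2)
      ha hab hD hne
    have hTS : (0:ℝ) < θ ^ (i^2) * σ ^ (j^2) := by positivity
    have key : (d₁ * (θ ^ (i^2) * (θ ^ (2*i+1))^2 * θ^2) * (σ ^ (j^2) * (σ ^ (2*j+1))^2 * σ^2) * (x 0)^2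
        + d₂ * θ ^ (i^2) * (σ ^ (j^2) * (σ ^ (2*j+1))^2 * σ^2) * (x 1)^2
        + d₃ * θ ^ (i^2) * σ ^ (j^2) * (x 2)^2
        + (d₁+d₂) * (θ ^ (i^2) * θ ^ (2*i+1)) * (σ ^ (j^2) * (σ ^ (2*j+1))^2 * σ^2) * (x 0 * x 1)
        + (d₁+d₃) * (θ ^ (i^2) * θ ^ (2*i+1)) * (σ ^ (j^2) * σ ^ (2*j+1)) * (x 0 * x 2)
        + (d₂+d₃) * θ ^ (i^2) * (σ ^ (j^2) * σ ^ (2*j+1)) * (x 1 * x 2)) * (θ^2*σ^2)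
        = (θ ^ (i^2) * σ ^ (j^2)) *
          ((d₁*θ^2*σ^2)*(θ ^ (2*i+1) * θ * (σ ^ (2*j+1) * σ) * x 0)^2
          + (d₂*θ^2*σ^2)*(σ ^ (2*j+1) * σ * x 1)^2
          + (d₃*θ^2*σ^2)*(x 2)^2
          + 2*((d₁+d₂)*θ*σ^2/2)*(θ ^ (2*i+1) * θ * (σ ^ (2*j+1) * σ) * x 0)*(σ ^ (2*j+1) * σ * x 1)
          + 2*((d₁+d₃)*θ*σ/2)*(θ ^ (2*i+1) * θ * (σ ^ (2*j+1) * σ) * x 0)*(x 2)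
          + 2*((d₂+d₃)*θ^2*σ/2)*(σ ^ (2*j+1) * σ * x 1)*(x 2)) := by ring
    have hpos := mul_pos hTS hF
    rw [← key] at hpos
    have hc : (0:ℝ) < θ^2*σ^2 := by positivity
    exact (mul_pos_iff_of_pos_right hc).mp hpos
end

section
/- Let p ≥ 1 be an integer, M₁, M₂ > 0, and let L : [0,T] → ℝ be a nonnegative differentiable function satisfying L′(t) ≤ M₁·L(t) + M₂·L(t)^{(p−1)/p} for all t ∈ [0,T]. Then E := L^{1/p} satisfies p·E′(t) ≤ M₁·E(t) + M₂ on the set where L > 0, and consequently L is bounded on [0,T] by a constant depending only on L(0), M₁, M₂, p, T; in particular L(t) ≤ ((L(0)^{1/p} + M₂/M₁)·e^{M₁t/p} − M₂/M₁)^p. -/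
open Set Filter Real Topology

theorem gronwall_type_bound
    (p : ℕ) (hp : 1 ≤ p) (M₁ M₂ T : ℝ) (hM₁ : 0 < M₁) (hM₂ : 0 < M₂) (hT : 0 ≤ T)
    (L L' : ℝ → ℝ)
    (hLnonneg : ∀ t ∈ Set.Icc (0 : ℝ) T, 0 ≤ L t)
    (hderiv : ∀ t ∈ Set.Icc (0 : ℝ) T, HasDerivAt L (L' t) t)
    (hineq : ∀ t ∈ Set.Icc (0 : ℝ) T,
      L' t ≤ M₁ * L t + M₂ * (L t ^ ((1 : ℝ) / p)) ^ (p - 1)) :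
    (∀ t ∈ Set.Icc (0 : ℝ) T, 0 < L t →
      (p : ℝ) * deriv (fun s => L s ^ ((1 : ℝ) / p)) t ≤
        M₁ * L t ^ ((1 : ℝ) / p) + M₂) ∧
    (∀ t ∈ Set.Icc (0 : ℝ) T,
      L t ≤ ((L 0 ^ ((1 : ℝ) / p) + M₂ / M₁) * Real.exp (M₁ * t / p) - M₂ / M₁) ^ p) := by
  have hp0 : (0 : ℝ) < p := by exact_mod_cast hp
  have hpne : (p : ℝ) ≠ 0 := ne_of_gt hp0
  set q : ℝ := (1 : ℝ) / p with hq
  have hq0 : 0 < q := by positivity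
  have hqp : q * p = 1 := by rw [hq]; field_simp
  have hcast : ((p - 1 : ℕ) : ℝ) = (p : ℝ) - 1 := by
    rw [Nat.cast_sub hp, Nat.cast_one]
  -- key exponent identity
  have hsum : q * ((p - 1 : ℕ) : ℝ) + (q - 1) = 0 := by
    rw [hcast, hq]; field_simp; ring
  -- npow-rpow conversion
  have hnpow : ∀ x : ℝ, 0 ≤ x → (x ^ q) ^ (p - 1) = x ^ (q * ((p - 1 : ℕ) : ℝ)) := by
    intro x hx
    rw [← Real.rpow_natCast (x ^ q) (p - 1), ← Real.rpow_mul hx]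
  constructor
  · -- Part 1
    intro t ht hpos
    have hd : HasDerivAt (fun s => L s ^ q) (L' t * q * L t ^ (q - 1)) t :=
      (hderiv t ht).rpow_const (Or.inl (ne_of_gt hpos))
    rw [hd.deriv]
    have hy1 : (0 : ℝ) < L t ^ (q - 1) := Real.rpow_pos_of_pos hpos _
    have h1 : L' t * L t ^ (q - 1) ≤
        (M₁ * L t + M₂ * (L t ^ q) ^ (p - 1)) * L t ^ (q - 1) :=
      mul_le_mul_of_nonneg_right (hineq t ht) (le_of_lt hy1)
    have h2 : L t * L t ^ (q - 1) = L t ^ q := by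
      nth_rewrite 1 [← Real.rpow_one (L t)]
      rw [← Real.rpow_add hpos]; ring_nf
    have h3 : (L t ^ q) ^ (p - 1) * L t ^ (q - 1) = 1 := by
      rw [hnpow _ hpos.le, ← Real.rpow_add hpos, hsum, Real.rpow_zero]
    calc (p : ℝ) * (L' t * q * L t ^ (q - 1))
        = L' t * L t ^ (q - 1) := by
          have : (p : ℝ) * q = 1 := by rw [mul_comm] at hqp; exact hqp
          field_simp [hq]
          linear_combination L' t * this
      _ ≤ (M₁ * L t + M₂ * (L t ^ q) ^ (p - 1)) * L t ^ (q - 1) := h1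
      _ = M₁ * (L t * L t ^ (q - 1)) + M₂ * ((L t ^ q) ^ (p - 1) * L t ^ (q - 1)) := by ring
      _ = M₁ * L t ^ q + M₂ := by rw [h2, h3, mul_one]
  · -- Part 2
    intro t ht
    set f : ℝ → ℝ := fun x =>
      (((L 0 + x) ^ q + M₂ / M₁) * Real.exp (M₁ * t / p) - M₂ / M₁) ^ p with hf
    have key : ∀ x ∈ Ioi (0 : ℝ), L t ≤ f x := by
      intro ε hε
      rw [mem_Ioi] at hε
      set g : ℝ → ℝ := fun s => (L s + ε) ^ q with hgdef
      have hypos : ∀ s ∈ Icc (0 : ℝ) T, (0 : ℝ) < L s + ε := fun s hs => by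
        have := hLnonneg s hs; linarith
      have hdg : ∀ s ∈ Icc (0 : ℝ) T,
          HasDerivAt g (L' s * q * (L s + ε) ^ (q - 1)) s := fun s hs =>
        ((hderiv s hs).add_const ε).rpow_const (Or.inl (ne_of_gt (hypos s hs)))
      have hcg : ContinuousOn g (Icc 0 T) := fun s hs =>
        (hdg s hs).continuousAt.continuousWithinAt
      have bound : ∀ x ∈ Ico (0 : ℝ) T,
          L' x * q * (L x + ε) ^ (q - 1) ≤ M₁ / p * g x + M₂ / p := by
        intro x hx
        have hx' : x ∈ Icc (0 : ℝ) T := Ico_subset_Icc_self hx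
        have hy : (0 : ℝ) < L x + ε := hypos x hx'
        have hLx : 0 ≤ L x := hLnonneg x hx'
        have hy1 : (0 : ℝ) < (L x + ε) ^ (q - 1) := Real.rpow_pos_of_pos hy _
        have h1 : L' x * (q * (L x + ε) ^ (q - 1)) ≤
            (M₁ * L x + M₂ * (L x ^ q) ^ (p - 1)) * (q * (L x + ε) ^ (q - 1)) :=
          mul_le_mul_of_nonneg_right (hineq x hx') (by positivity)
        have h2 : M₁ * L x * (L x + ε) ^ (q - 1) ≤ M₁ * (L x + ε) ^ q := by
          have : L x * (L x + ε) ^ (q - 1) ≤ (L x + ε) * (L x + ε) ^ (q - 1) := by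
            apply mul_le_mul_of_nonneg_right (by linarith) hy1.le
          have h2' : (L x + ε) * (L x + ε) ^ (q - 1) = (L x + ε) ^ q := by
            nth_rewrite 1 [← Real.rpow_one (L x + ε)]
            rw [← Real.rpow_add hy]; ring_nf
          calc M₁ * L x * (L x + ε) ^ (q - 1)
              = M₁ * (L x * (L x + ε) ^ (q - 1)) := by ring
            _ ≤ M₁ * ((L x + ε) * (L x + ε) ^ (q - 1)) :=
                mul_le_mul_of_nonneg_left this hM₁.le
            _ = M₁ * (L x + ε) ^ q := by rw [h2']
        have h3 : (L x ^ q) ^ (p - 1) * (L x + ε) ^ (q - 1) ≤ 1 := by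
          have hle : (L x ^ q) ^ (p - 1) ≤ (L x + ε) ^ (q * ((p - 1 : ℕ) : ℝ)) := by
            rw [hnpow _ hLx]
            exact Real.rpow_le_rpow hLx (by linarith) (by positivity)
          calc (L x ^ q) ^ (p - 1) * (L x + ε) ^ (q - 1)
              ≤ (L x + ε) ^ (q * ((p - 1 : ℕ) : ℝ)) * (L x + ε) ^ (q - 1) :=
                mul_le_mul_of_nonneg_right hle hy1.le
            _ = 1 := by rw [← Real.rpow_add hy, hsum, Real.rpow_zero]
        have h4 : (M₁ * L x + M₂ * (L x ^ q) ^ (p - 1)) * (L x + ε) ^ (q - 1) ≤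
            M₁ * (L x + ε) ^ q + M₂ := by
          have : M₂ * (L x ^ q) ^ (p - 1) * (L x + ε) ^ (q - 1) ≤ M₂ := by
            calc M₂ * (L x ^ q) ^ (p - 1) * (L x + ε) ^ (q - 1)
                = M₂ * ((L x ^ q) ^ (p - 1) * (L x + ε) ^ (q - 1)) := by ring
              _ ≤ M₂ * 1 := mul_le_mul_of_nonneg_left h3 hM₂.le
              _ = M₂ := mul_one _
          nlinarith [h2]
        calc L' x * q * (L x + ε) ^ (q - 1)
            = L' x * (q * (L x + ε) ^ (q - 1)) := by ring
          _ ≤ (M₁ * L x + M₂ * (L x ^ q) ^ (p - 1)) * (q * (L x + ε) ^ (q - 1)) := h1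
          _ = q * ((M₁ * L x + M₂ * (L x ^ q) ^ (p - 1)) * (L x + ε) ^ (q - 1)) := by ring
          _ ≤ q * (M₁ * (L x + ε) ^ q + M₂) := mul_le_mul_of_nonneg_left h4 hq0.le
          _ = M₁ / p * g x + M₂ / p := by
              simp only [hgdef, hq]; field_simp
      have gron := le_gronwallBound_of_liminf_deriv_right_le hcg
        (fun x hx r hr =>
          ((hdg x (Ico_subset_Icc_self hx)).hasDerivWithinAt).liminf_right_slope_le hr)
        (le_refl (g 0)) bound t ht
      rw [sub_zero, gronwallBound_of_K_ne_0 (by positivity : M₁ / (p : ℝ) ≠ 0)] at gron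
      have hKt : M₁ / (p : ℝ) * t = M₁ * t / p := by ring
      have hdiv : M₂ / (p : ℝ) / (M₁ / (p : ℝ)) = M₂ / M₁ := by
        field_simp
      have gron2 : g t ≤ (L 0 + ε) ^ q * Real.exp (M₁ / (p : ℝ) * t)
          + M₂ / (p : ℝ) / (M₁ / (p : ℝ)) * (Real.exp (M₁ / (p : ℝ) * t) - 1) := gron
      rw [hKt, hdiv] at gron2
      have gron' : g t ≤ ((L 0 + ε) ^ q + M₂ / M₁) * Real.exp (M₁ * t / p) - M₂ / M₁ := by
        calc g t ≤ (L 0 + ε) ^ q * Real.exp (M₁ * t / p)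
              + M₂ / M₁ * (Real.exp (M₁ * t / p) - 1) := gron2
          _ = ((L 0 + ε) ^ q + M₂ / M₁) * Real.exp (M₁ * t / p) - M₂ / M₁ := by ring
      have hgt : g t ^ p = L t + ε := by
        rw [hgdef]
        rw [← Real.rpow_natCast ((L t + ε) ^ q) p, ← Real.rpow_mul (hypos t ht).le, hqp,
          Real.rpow_one]
      have : L t + ε ≤ f ε := by
        rw [← hgt, hf]
        exact pow_le_pow_left₀ (Real.rpow_nonneg (hypos t ht).le _) gron' p
      linarith
    have hcont : ContinuousAt f 0 := by
      apply ContinuousAt.pow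
      apply ContinuousAt.sub _ continuousAt_const
      apply ContinuousAt.mul _ continuousAt_const
      apply ContinuousAt.add _ continuousAt_const
      exact (Real.continuousAt_rpow_const (L 0 + 0) q (Or.inr hq0.le)).comp
        ((continuous_const.add continuous_id).continuousAt)
    have htend : Tendsto f (𝓝[>] (0 : ℝ)) (𝓝 (f 0)) :=
      hcont.continuousWithinAt.tendsto
    have hle : L t ≤ f 0 :=
      ge_of_tendsto htend (eventually_nhdsWithin_of_forall key)
    simpa [hf] using hle
end
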